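/- arXiv:2502.18784 — 2 statements merged into one kernel-verified Lean document; each statement's English description precedes it below -/
import Mathlib

section
/- Let Z be a nonempty irreducible closed subset of Esp_C and define 𝒫(Z) := {a ∈ E : U(a) ∩ Z ≠ ∅}, where U(a) := {P ∈ C : a ∈ P}. Then 𝒫(Z) contains 0 and satisfies a ⊕ b ∈ 𝒫(Z) if and only if a ∈ 𝒫(Z) and b ∈ 𝒫(Z). -/
/-- The basic open set `U(a) = {P ∈ C : a ∈ P}`. -/
def espU {E : Type*} (C : Set (Set E)) (a : E) : Set C := {P : C | a ∈ (P : Set E)}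

/-- The topology on `C` generated by the basis `{U(a)}_{a ∈ E}`. -/
def espTop {E : Type*} (C : Set (Set E)) : TopologicalSpace C :=
  TopologicalSpace.generateFrom {s | ∃ a : E, s = espU C a}

theorem stmt_6 {E : Type*} (op : E → E → E) (z : E) (C : Set (Set E))
    (hC : ∀ P ∈ C, z ∈ P ∧ ∀ a b : E, op a b ∈ P ↔ a ∈ P ∧ b ∈ P)
    (Z : Set C) (hirr : @IsIrreducible _ (espTop C) Z) (hcl : @IsClosed _ (espTop C) Z) :
    z ∈ {a : E | (espU C a ∩ Z).Nonempty} ∧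
    ∀ a b : E, op a b ∈ {c : E | (espU C c ∩ Z).Nonempty} ↔
      (a ∈ {c : E | (espU C c ∩ Z).Nonempty} ∧ b ∈ {c : E | (espU C c ∩ Z).Nonempty}) := by

  have hopen : ∀ a : E, @IsOpen _ (espTop C) (espU C a) := fun a =>
    TopologicalSpace.GenerateOpen.basic _ ⟨a, rfl⟩
  obtain ⟨⟨P0, hP0⟩, hP0Z⟩ := hirr.1
  constructor
  · exact ⟨⟨P0, hP0⟩, (hC P0 hP0).1, hP0Z⟩
  · intro a b
    constructor
    · rintro ⟨⟨P, hP⟩, hab, hPZ⟩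
      obtain ⟨h1, h2⟩ := ((hC P hP).2 a b).1 hab
      exact ⟨⟨⟨P, hP⟩, h1, hPZ⟩, ⟨⟨P, hP⟩, h2, hPZ⟩⟩
    · rintro ⟨⟨P, hPa, hPZ⟩, ⟨Q, hQb, hQZ⟩⟩
      obtain ⟨R, hRZ, hRa, hRb⟩ := hirr.2 (espU C a) (espU C b) (hopen a) (hopen b)
        ⟨P, hPZ, hPa⟩ ⟨Q, hQZ, hQb⟩
      exact ⟨R, ((hC R R.2).2 a b).2 ⟨hRa, hRb⟩, hRZ⟩
end

section
/- The space Esp_C is sober if and only if for every nonempty irreducible closed subset Z ⊆ Esp_C, the set 𝒫(Z) := {a ∈ E : U(a) ∩ Z ≠ ∅} is an element of C; moreover in that case Z = closure({𝒫(Z)}), i.e. 𝒫(Z) is the (unique) generic point of Z. -/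
/-- `𝒫(Z) := {a ∈ E : U(a) ∩ Z ≠ ∅}`. -/
def espP {E : Type*} (C : Set (Set E)) (Z : Set C) : Set E :=
  {a : E | (espU C a ∩ Z).Nonempty}

section Aux

variable {E : Type*} {C : Set (Set E)} {op : E → E → E} {z : E}

lemma esp_isOpen_U (a : E) : @IsOpen C (espTop C) (espU C a) :=
  TopologicalSpace.GenerateOpen.basic _ ⟨a, rfl⟩

lemma esp_basis
    (hC : ∀ P ∈ C, z ∈ P ∧ ∀ a b : E, op a b ∈ P ↔ a ∈ P ∧ b ∈ P) :
    @TopologicalSpace.IsTopologicalBasis C (espTop C) {s | ∃ a : E, s = espU C a} := by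
  letI := espTop C
  refine ⟨?_, ?_, rfl⟩
  · rintro _ ⟨a, rfl⟩ _ ⟨b, rfl⟩ P ⟨ha, hb⟩
    refine ⟨espU C (op a b), ⟨op a b, rfl⟩, ((hC P.1 P.2).2 a b).mpr ⟨ha, hb⟩,
      fun Q hQ => ((hC Q.1 Q.2).2 a b).mp hQ⟩
  · apply Set.eq_univ_of_forall
    intro P
    exact Set.mem_sUnion.mpr ⟨espU C z, ⟨z, rfl⟩, (hC P.1 P.2).1⟩

lemma esp_mem_closure
    (hC : ∀ P ∈ C, z ∈ P ∧ ∀ a b : E, op a b ∈ P ↔ a ∈ P ∧ b ∈ P) (P Q : C) :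
    Q ∈ @closure C (espTop C) {P} ↔ (Q : Set E) ⊆ (P : Set E) := by
  letI := espTop C
  rw [(esp_basis hC).mem_closure_iff]
  constructor
  · intro h a haQ
    obtain ⟨R, hRa, hR⟩ := h (espU C a) ⟨a, rfl⟩ haQ
    rw [Set.mem_singleton_iff] at hR
    exact hR ▸ hRa
  · rintro h _ ⟨a, rfl⟩ hQ
    exact ⟨P, h hQ, rfl⟩

lemma esp_mem_of_subset
    (hC : ∀ P ∈ C, z ∈ P ∧ ∀ a b : E, op a b ∈ P ↔ a ∈ P ∧ b ∈ P)
    {Z : Set C} (hZc : @IsClosed C (espTop C) Z) (Q : C)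
    (hQ : (Q : Set E) ⊆ espP C Z) : Q ∈ Z := by
  letI := espTop C
  by_contra hq
  obtain ⟨o, ⟨a, rfl⟩, haQ, hsub⟩ :=
    (esp_basis hC).exists_subset_of_mem_open (show Q ∈ Zᶜ from hq) hZc.isOpen_compl
  obtain ⟨R, hRa, hRZ⟩ := hQ haQ
  exact hsub hRa hRZ

lemma esp_subset_of_mem {Z : Set C} (Q : C) (hQ : Q ∈ Z) :
    (Q : Set E) ⊆ espP C Z :=
  fun a ha => ⟨Q, ha, hQ⟩

end Aux

theorem stmt_7 {E : Type*} (op : E → E → E) (z : E) (C : Set (Set E))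
    (hC : ∀ P ∈ C, z ∈ P ∧ ∀ a b : E, op a b ∈ P ↔ a ∈ P ∧ b ∈ P) :
    ((@QuasiSober _ (espTop C) ∧ @T0Space _ (espTop C)) ↔
      ∀ Z : Set C, @IsIrreducible _ (espTop C) Z → @IsClosed _ (espTop C) Z →
        espP C Z ∈ C) ∧
    (∀ Z : Set C, @IsIrreducible _ (espTop C) Z → @IsClosed _ (espTop C) Z →
      ∀ h : espP C Z ∈ C, Z = @closure _ (espTop C) {⟨espP C Z, h⟩}) := by
  letI := espTop C
  have hT0 : T0Space C := by
    rw [t0Space_iff_inseparable]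
    intro P Q h
    refine Subtype.ext (Set.ext fun a => ?_)
    exact h.mem_open_iff (esp_isOpen_U a)
  have key : ∀ Z : Set C, IsClosed Z → ∀ h : espP C Z ∈ C,
      Z = closure {(⟨espP C Z, h⟩ : C)} := by
    intro Z hZc h
    ext Q
    rw [esp_mem_closure hC]
    exact ⟨fun hQ => esp_subset_of_mem Q hQ, fun hQ => esp_mem_of_subset hC hZc Q hQ⟩
  refine ⟨⟨fun ⟨hqs, _⟩ Z hZ hZc => ?_, fun hcond => ⟨⟨fun {Z} hZ hZc => ?_⟩, hT0⟩⟩,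
    fun Z _ hZc h => key Z hZc h⟩
  · obtain ⟨ξ, hξ⟩ := hqs.sober hZ hZc
    have hmem : ξ ∈ Z := hξ.mem
    have : espP C Z = (ξ : Set E) := by
      ext a
      constructor
      · rintro ⟨R, hRa, hRZ⟩
        have : R ∈ closure {ξ} := hξ ▸ hRZ
        exact (esp_mem_closure hC ξ R).mp this hRa
      · intro ha
        exact ⟨ξ, ha, hmem⟩
    rw [this]
    exact ξ.2
  · exact ⟨⟨espP C Z, hcond Z hZ hZc⟩, (key Z hZc _).symm⟩
end
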